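/- (Constant-stepsize case of the paper's error-estimate theorem.) Let f : ℝⁿ → ℝⁿ be Lipschitz continuous with constant L_f > 0, let Δ > 0, set t_j := t_0 + j·Δ, and let u : [t_0, t_m] → ℝⁿ be a solution of the autonomous ODE x' = f(x) on [t_0, t_m]. Define predicted states by p_0 := u(t_0) and p_{j+1} := p_j + Δ · N_j for j = 0, …, m−1. Suppose that for each j there is a solution w_j : [0, Δ] → ℝⁿ of the same ODE with w_j(0) = p_j, and that ‖N_j − (w_j(Δ) − p_j)/Δ‖₂ ≤ E for some fixed E ≥ 0. Then for every j with 1 ≤ j ≤ m, ‖p_j − u(t_j)‖₂ ≤ E · Δ · (exp(L_f · j · Δ) − 1)/(exp(L_f · Δ) − 1). -/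

import Mathlib

/-- error-estimate theorem, constant stepsize `Δ`: with `t_j = t_0 + jΔ`,
prediction errors satisfy
`‖p j - u (t_0 + jΔ)‖ ≤ E Δ (exp (L_f j Δ) - 1)/(exp (L_f Δ) - 1)` for `1 ≤ j ≤ m`. -/
theorem stmt_4 {n : ℕ} (f : EuclideanSpace ℝ (Fin n) → EuclideanSpace ℝ (Fin n))
    (Lf Δ E t₀ : ℝ) (hLf : 0 < Lf) (hΔ : 0 < Δ) (hE : 0 ≤ E)
    (hf : ∀ x y, ‖f x - f y‖ ≤ Lf * ‖x - y‖)
    (m : ℕ) (u : ℝ → EuclideanSpace ℝ (Fin n))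
    (hu : ∀ s ∈ Set.Icc t₀ (t₀ + m * Δ), HasDerivAt u (f (u s)) s)
    (N : ℕ → EuclideanSpace ℝ (Fin n)) (p : ℕ → EuclideanSpace ℝ (Fin n))
    (hp0 : p 0 = u t₀)
    (hpstep : ∀ j < m, p (j + 1) = p j + Δ • N j)
    (w : ℕ → ℝ → EuclideanSpace ℝ (Fin n))
    (hw : ∀ j < m, ∀ s ∈ Set.Icc (0 : ℝ) Δ, HasDerivAt (w j) (f (w j s)) s)
    (hw0 : ∀ j < m, w j 0 = p j)
    (hN : ∀ j < m, ‖N j - Δ⁻¹ • (w j Δ - p j)‖ ≤ E) :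
    ∀ j, 1 ≤ j → j ≤ m →
      ‖p j - u (t₀ + j * Δ)‖ ≤
        E * Δ * (Real.exp (Lf * j * Δ) - 1) / (Real.exp (Lf * Δ) - 1) := by
  set a : ℝ := Real.exp (Lf * Δ) with ha_def
  have ha1 : 1 < a := by
    have := Real.add_one_le_exp (Lf * Δ)
    have := mul_pos hLf hΔ
    rw [ha_def]; linarith
  have haK : LipschitzWith Lf.toNNReal f := by
    refine LipschitzWith.of_dist_le_mul fun x y => ?_
    rw [dist_eq_norm, dist_eq_norm]
    simpa [Real.coe_toNNReal _ hLf.le] using hf x y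
  -- One-step Grönwall bound
  have key : ∀ j < m, ‖w j Δ - u (t₀ + j * Δ + Δ)‖ ≤ a * ‖p j - u (t₀ + j * Δ)‖ := by
    intro j hj
    set c : ℝ := t₀ + j * Δ with hc
    have hmem : ∀ s ∈ Set.Icc (0:ℝ) Δ, c + s ∈ Set.Icc t₀ (t₀ + m * Δ) := by
      intro s hs
      have hjm : (j:ℝ) + 1 ≤ m := by exact_mod_cast hj
      constructor
      · have : (0:ℝ) ≤ j * Δ := by positivity
        simp only [hc]; linarith [hs.1]
      · simp only [hc]; nlinarith [hs.2, hs.1]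
    have hg' : ∀ s ∈ Set.Icc (0:ℝ) Δ,
        HasDerivAt (fun s => u (c + s)) (f (u (c + s))) s := by
      intro s hs
      have h1 : HasDerivAt (fun s : ℝ => c + s) 1 s := (hasDerivAt_id s).const_add c
      have h2 := (hu (c + s) (hmem s hs)).scomp s h1
      simp only [one_smul] at h2
      exact h2
    have := dist_le_of_trajectories_ODE (v := fun _ x => f x) (K := Lf.toNNReal)
      (f := w j) (g := fun s => u (c + s)) (a := 0) (b := Δ)
      (δ := dist (w j 0) (u (c + 0)))
      (fun _ => haK)
      (fun s hs => ((hw j hj s hs).continuousAt).continuousWithinAt)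
      (fun s hs => ((hw j hj s (Set.Ico_subset_Icc_self hs)).hasDerivWithinAt))
      (fun s hs => ((hg' s hs).continuousAt).continuousWithinAt)
      (fun s hs => ((hg' s (Set.Ico_subset_Icc_self hs)).hasDerivWithinAt))
      le_rfl Δ (Set.mem_Icc.mpr ⟨hΔ.le, le_rfl⟩)
    simp only [add_zero, sub_zero, hw0 j hj, dist_eq_norm] at this
    calc ‖w j Δ - u (c + Δ)‖ ≤ ‖p j - u c‖ * Real.exp (Lf.toNNReal * Δ) := this
      _ = a * ‖p j - u c‖ := by
          rw [Real.coe_toNNReal _ hLf.le, ha_def, mul_comm]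
  -- error recursion
  have step : ∀ j < m,
      ‖p (j+1) - u (t₀ + (j+1) * Δ)‖ ≤ a * ‖p j - u (t₀ + j * Δ)‖ + E * Δ := by
    intro j hj
    have hdecomp : p (j+1) - u (t₀ + (j+1) * Δ)
        = (w j Δ - u (t₀ + j * Δ + Δ)) + Δ • (N j - Δ⁻¹ • (w j Δ - p j)) := by
      rw [hpstep j hj]
      have : Δ • (Δ⁻¹ • (w j Δ - p j)) = w j Δ - p j := by
        rw [smul_smul, mul_inv_cancel₀ hΔ.ne', one_smul]
      rw [smul_sub, this]
      have : t₀ + ((j:ℝ)+1) * Δ = t₀ + j * Δ + Δ := by ring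
      rw [this]
      abel
    calc ‖p (j+1) - u (t₀ + (j+1) * Δ)‖
        ≤ ‖w j Δ - u (t₀ + j * Δ + Δ)‖ + ‖Δ • (N j - Δ⁻¹ • (w j Δ - p j))‖ := by
          rw [hdecomp]; exact norm_add_le _ _
      _ ≤ a * ‖p j - u (t₀ + j * Δ)‖ + E * Δ := by
          refine add_le_add (key j hj) ?_
          rw [norm_smul, Real.norm_of_nonneg hΔ.le, mul_comm]
          exact mul_le_mul_of_nonneg_right (hN j hj) hΔ.le
  -- closed-form bound by induction
  have main : ∀ j ≤ m, ‖p j - u (t₀ + j * Δ)‖ ≤ E * Δ * (a ^ j - 1) / (a - 1) := by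
    intro j
    induction j with
    | zero => intro _; simp [hp0]
    | succ j ih =>
      intro hjm
      have hj : j < m := Nat.lt_of_succ_le hjm
      have h1 := step j hj
      have h2 := ih hj.le
      have ha0 : (0:ℝ) < a - 1 := by linarith
      have h3 : a * ‖p j - u (t₀ + j * Δ)‖ ≤ a * (E * Δ * (a ^ j - 1) / (a - 1)) :=
        mul_le_mul_of_nonneg_left h2 (by linarith)
      have heq : a * (E * Δ * (a ^ j - 1) / (a - 1)) + E * Δ
          = E * Δ * (a ^ (j+1) - 1) / (a - 1) := by
        field_simp
        ring
      push_cast at h1 ⊢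
      linarith
  intro j _ hjm
  have : Real.exp (Lf * j * Δ) = a ^ j := by
    rw [ha_def, ← Real.exp_nat_mul]
    ring_nf
  rw [this]
  exact main j hjm
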